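/- For every r ∈ (0,1) and every β ∈ ℝ, with q = √(1−r²), the product R_L(π)·R_R(π+β)·R_L(π) equals the 3×3 matrix with entries: (1,1) = (1−4r²)²(1−r²) − r²(3−4r²)² cos β; (1,2) = r(4r²−3) sin β; (1,3) = r·q·(4r²−1)(4r²−3)(1+cos β); (2,1) = −r(4r²−3) sin β; (2,2) = −cos β; (2,3) = q(4r²−1) sin β; (3,1) = r·q·(4r²−1)(4r²−3)(1+cos β); (3,2) = −q(4r²−1) sin β; (3,3) = r²(3−4r²)² − (4r²−1)²(1−r²) cos β. -/

import Mathlib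

open Real

noncomputable def OmegaL (r : ℝ) : Matrix (Fin 3) (Fin 3) ℝ :=
  !![0, -r, 0; r, 0, -Real.sqrt (1 - r ^ 2); 0, Real.sqrt (1 - r ^ 2), 0]

noncomputable def OmegaR (r : ℝ) : Matrix (Fin 3) (Fin 3) ℝ :=
  !![0, -r, 0; r, 0, Real.sqrt (1 - r ^ 2); 0, -Real.sqrt (1 - r ^ 2), 0]

noncomputable def OmegaG : Matrix (Fin 3) (Fin 3) ℝ :=
  !![0, -1, 0; 1, 0, 0; 0, 0, 0]

/-- Rotation matrix of a left turn of radius `r` and arc angle `φ`. -/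
noncomputable def RL (r φ : ℝ) : Matrix (Fin 3) (Fin 3) ℝ := NormedSpace.exp (φ • OmegaL r)

/-- Rotation matrix of a right turn of radius `r` and arc angle `φ`. -/
noncomputable def RR (r φ : ℝ) : Matrix (Fin 3) (Fin 3) ℝ := NormedSpace.exp (φ • OmegaR r)

/-- Rotation matrix of a great-circle arc of angle `φ`. -/
noncomputable def RG (φ : ℝ) : Matrix (Fin 3) (Fin 3) ℝ := NormedSpace.exp (φ • OmegaG)

/-- The ring hom `ℂ × ℝ → M₃(ℝ)` sending `(z, t)` to the block matrix with the
standard `2×2` realization of `z` and `t` in the corner. -/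
noncomputable def blockHom : ℂ × ℝ →+* Matrix (Fin 3) (Fin 3) ℝ where
  toFun p := !![p.1.re, -p.1.im, 0; p.1.im, p.1.re, 0; 0, 0, p.2]
  map_one' := by
    ext i j
    fin_cases i <;> fin_cases j <;>
      simp [Matrix.one_apply, Matrix.vecHead, Matrix.vecTail]
  map_mul' p q := by
    ext i j
    fin_cases i <;> fin_cases j <;>
      simp [Matrix.mul_apply, Fin.sum_univ_succ, Complex.mul_re, Complex.mul_im,
        Matrix.vecHead, Matrix.vecTail] <;> ring
  map_zero' := by
    ext i j
    fin_cases i <;> fin_cases j <;> simp [Matrix.vecHead, Matrix.vecTail]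
  map_add' p q := by
    ext i j
    fin_cases i <;> fin_cases j <;>
      simp [Matrix.vecHead, Matrix.vecTail] <;> ring

lemma blockHom_continuous : Continuous blockHom := by
  apply continuous_matrix
  intro i j
  fin_cases i <;> fin_cases j <;>
    simp only [blockHom, RingHom.coe_mk, MonoidHom.coe_mk, OneHom.coe_mk] <;>
    simp [Matrix.vecHead, Matrix.vecTail] <;> fun_prop

attribute [local instance] Matrix.linftyOpNormedRing Matrix.linftyOpNormedAlgebra

open Matrix in
lemma expG (φ : ℝ) :
    RG φ = !![Real.cos φ, -Real.sin φ, 0; Real.sin φ, Real.cos φ, 0; 0, 0, 1] := by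
  have h1 : φ • OmegaG = blockHom ((φ : ℂ) * Complex.I, (0 : ℝ)) := by
    ext i j
    fin_cases i <;> fin_cases j <;> simp [OmegaG, blockHom, Matrix.vecHead, Matrix.vecTail]
  have h2 : NormedSpace.exp (((φ : ℂ) * Complex.I, (0 : ℝ)) : ℂ × ℝ) =
      ((Real.cos φ + Real.sin φ * Complex.I, (1 : ℝ)) : ℂ × ℝ) := by
    have hfst := Prod.fst_exp (𝔸 := ℂ) (𝔹 := ℝ) ((φ : ℂ) * Complex.I, (0 : ℝ))
    have hsnd := Prod.snd_exp (𝔸 := ℂ) (𝔹 := ℝ) ((φ : ℂ) * Complex.I, (0 : ℝ))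
    have hc : NormedSpace.exp ((φ : ℂ) * Complex.I) =
        (Real.cos φ : ℂ) + (Real.sin φ : ℂ) * Complex.I := by
      rw [← Complex.exp_eq_exp_ℂ, Complex.exp_mul_I]
      simp [Complex.ofReal_cos, Complex.ofReal_sin]
    have h0 : NormedSpace.exp ((0 : ℝ)) = 1 := NormedSpace.exp_zero
    apply Prod.ext
    · rw [hfst, hc]
    · rw [hsnd]; exact h0
  rw [RG, h1]
  erw [← NormedSpace.map_exp blockHom blockHom_continuous, h2]
  ext i j
  fin_cases i <;> fin_cases j <;>
    simp [blockHom, Complex.add_re, Complex.add_im, Complex.mul_re, Complex.mul_im,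
      Complex.cos_ofReal_re, Complex.sin_ofReal_re, Matrix.vecHead, Matrix.vecTail]

lemma conj_exp (U A : Matrix (Fin 3) (Fin 3) ℝ) (h1 : U * U.transpose = 1)
    (h2 : U.transpose * U = 1) :
    NormedSpace.exp (U * A * U.transpose) = U * NormedSpace.exp A * U.transpose :=
  Matrix.exp_units_conj ⟨U, U.transpose, h1, h2⟩ A

set_option maxHeartbeats 1600000 in
theorem stmt_13 (r β : ℝ) (hr : r ∈ Set.Ioo (0 : ℝ) 1) :
    RL r Real.pi * RR r (Real.pi + β) * RL r Real.pi =
      !![(1 - 4 * r ^ 2) ^ 2 * (1 - r ^ 2) - r ^ 2 * (3 - 4 * r ^ 2) ^ 2 * Real.cos β,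
         r * (4 * r ^ 2 - 3) * Real.sin β,
         r * Real.sqrt (1 - r ^ 2) * (4 * r ^ 2 - 1) * (4 * r ^ 2 - 3) * (1 + Real.cos β);
         -(r * (4 * r ^ 2 - 3) * Real.sin β),
         -Real.cos β,
         Real.sqrt (1 - r ^ 2) * (4 * r ^ 2 - 1) * Real.sin β;
         r * Real.sqrt (1 - r ^ 2) * (4 * r ^ 2 - 1) * (4 * r ^ 2 - 3) * (1 + Real.cos β),
         -(Real.sqrt (1 - r ^ 2) * (4 * r ^ 2 - 1) * Real.sin β),
         r ^ 2 * (3 - 4 * r ^ 2) ^ 2 - (4 * r ^ 2 - 1) ^ 2 * (1 - r ^ 2) * Real.cos β] := by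
  obtain ⟨hr0, hr1⟩ := hr
  have h1r : (0 : ℝ) ≤ 1 - r ^ 2 := by nlinarith
  set q : ℝ := Real.sqrt (1 - r ^ 2) with hqdef
  have hq : q ^ 2 = 1 - r ^ 2 := Real.sq_sqrt h1r
  clear_value q
  set U : Matrix (Fin 3) (Fin 3) ℝ := !![r, 0, q; 0, 1, 0; -q, 0, r] with hU
  set V : Matrix (Fin 3) (Fin 3) ℝ := !![r, 0, -q; 0, 1, 0; q, 0, r] with hV
  have hUt : U.transpose = !![r, 0, -q; 0, 1, 0; q, 0, r] := by
    ext i j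
    fin_cases i <;> fin_cases j <;>
      simp [hU, Matrix.transpose_apply, Matrix.vecHead, Matrix.vecTail]
  have hVt : V.transpose = !![r, 0, q; 0, 1, 0; -q, 0, r] := by
    ext i j
    fin_cases i <;> fin_cases j <;>
      simp [hV, Matrix.transpose_apply, Matrix.vecHead, Matrix.vecTail]
  have hU1 : U * U.transpose = 1 := by
    rw [hUt, hU, Matrix.mul_fin_three, Matrix.one_fin_three]
    ext i j
    fin_cases i <;> fin_cases j <;>
      simp [Matrix.vecHead, Matrix.vecTail] <;> (first | ring1 | linear_combination hq)
  have hU2 : U.transpose * U = 1 := by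
    rw [hUt, hU, Matrix.mul_fin_three, Matrix.one_fin_three]
    ext i j
    fin_cases i <;> fin_cases j <;>
      simp [Matrix.vecHead, Matrix.vecTail] <;> (first | ring1 | linear_combination hq)
  have hV1 : V * V.transpose = 1 := by
    rw [hVt, hV, Matrix.mul_fin_three, Matrix.one_fin_three]
    ext i j
    fin_cases i <;> fin_cases j <;>
      simp [Matrix.vecHead, Matrix.vecTail] <;> (first | ring1 | linear_combination hq)
  have hV2 : V.transpose * V = 1 := by
    rw [hVt, hV, Matrix.mul_fin_three, Matrix.one_fin_three]
    ext i j
    fin_cases i <;> fin_cases j <;>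
      simp [Matrix.vecHead, Matrix.vecTail] <;> (first | ring1 | linear_combination hq)
  have hsmulG : ∀ φ : ℝ, φ • OmegaG = !![0, -φ, 0; φ, 0, 0; 0, 0, 0] := by
    intro φ
    ext i j
    fin_cases i <;> fin_cases j <;> simp [OmegaG, Matrix.vecHead, Matrix.vecTail]
  have hL : ∀ φ : ℝ, RL r φ = U * RG φ * U.transpose := by
    intro φ
    have key : φ • OmegaL r = U * (φ • OmegaG) * U.transpose := by
      rw [hsmulG, hUt, hU, Matrix.mul_fin_three, Matrix.mul_fin_three]
      ext i j
      fin_cases i <;> fin_cases j <;>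
        simp [OmegaL, ← hqdef, Matrix.vecHead, Matrix.vecTail] <;> ring
    rw [RL, key, conj_exp U _ hU1 hU2, RG]
  have hR : ∀ φ : ℝ, RR r φ = V * RG φ * V.transpose := by
    intro φ
    have key : φ • OmegaR r = V * (φ • OmegaG) * V.transpose := by
      rw [hsmulG, hVt, hV, Matrix.mul_fin_three, Matrix.mul_fin_three]
      ext i j
      fin_cases i <;> fin_cases j <;>
        simp [OmegaR, ← hqdef, Matrix.vecHead, Matrix.vecTail] <;> ring
    rw [RR, key, conj_exp V _ hV1 hV2, RG]
  set c : ℝ := Real.cos β with hc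
  set s : ℝ := Real.sin β with hs
  clear_value c s
  have hGpi : RG Real.pi = !![(-1 : ℝ), 0, 0; 0, -1, 0; 0, 0, 1] := by
    rw [expG]
    ext i j
    fin_cases i <;> fin_cases j <;>
      simp [Real.cos_pi, Real.sin_pi, Matrix.vecHead, Matrix.vecTail]
  have hGb : RG (Real.pi + β) = !![-c, s, 0; -s, -c, 0; 0, 0, 1] := by
    rw [expG]
    ext i j
    fin_cases i <;> fin_cases j <;>
      simp [Real.cos_add, Real.sin_add, Real.cos_pi, Real.sin_pi, hc, hs,
        Matrix.vecHead, Matrix.vecTail] <;> try ring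
  have e1 : U * !![(-1 : ℝ), 0, 0; 0, -1, 0; 0, 0, 1] * U.transpose =
      !![1 - 2*r^2, 0, 2*r*q; 0, -1, 0; 2*r*q, 0, -1 + 2*r^2] := by
    rw [hUt, hU, Matrix.mul_fin_three, Matrix.mul_fin_three]
    ext i j
    fin_cases i <;> fin_cases j <;>
      simp [Matrix.vecHead, Matrix.vecTail] <;>
      (first | ring1 | linear_combination hq | linear_combination -hq)
  have e2 : V * !![-c, s, 0; -s, -c, 0; 0, 0, 1] * V.transpose =
      !![1 - r^2 - r^2*c, r*s, -(r*q) - r*q*c;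
         -(r*s), -c, -(q*s);
         -(r*q) - r*q*c, q*s, -c + r^2 + r^2*c] := by
    rw [hVt, hV, Matrix.mul_fin_three, Matrix.mul_fin_three]
    ext i j
    fin_cases i <;> fin_cases j <;>
      simp [Matrix.vecHead, Matrix.vecTail] <;>
      (first | ring1 | linear_combination hq | linear_combination (-c) * hq)
  rw [hL, hR, hGpi, hGb, e1, e2]
  rw [Matrix.mul_fin_three, Matrix.mul_fin_three]
  ext i j
  fin_cases i <;> fin_cases j <;>
    simp [Matrix.vecHead, Matrix.vecTail] <;>
    (first
      | ring1
      | linear_combination (-(4*r^2) - 8*r^2*c + 12*r^4 + 12*r^4*c) * hq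
      | linear_combination (-(2*r*s)) * hq
      | linear_combination (-(4*r^3*q) - 4*r^3*q*c) * hq
      | linear_combination (2*r*s) * hq
      | linear_combination (8*r^2 + 4*r^2*c - 12*r^4 - 12*r^4*c) * hq)
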